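/- A group homomorphism ρ : Γ → G from the discrete Heisenberg group to the real Heisenberg group is injective if and only if its image ρ(Γ) is non-abelian. -/

import Mathlib

open Matrix

/-- A 3×3 matrix is upper unitriangular (Heisenberg) if it has the form
`[[1,a,c],[0,1,b],[0,0,1]]`. -/
def IsHeis {R : Type*} [CommRing R] (M : Matrix (Fin 3) (Fin 3) R) : Prop :=
  M = !![1, M 0 1, M 0 2; 0, 1, M 1 2; 0, 0, 1]

/-- The Heisenberg group over `R`: upper unitriangular 3×3 matrices under
matrix multiplication. -/
def Heis (R : Type*) [CommRing R] : Type _ := {M : Matrix (Fin 3) (Fin 3) R // IsHeis M}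

namespace Heis

variable {R : Type*} [CommRing R]

lemma isHeis_mk (a b c : R) : IsHeis !![1, a, c; 0, 1, b; 0, 0, 1] := by
  unfold IsHeis; ext i j; fin_cases i <;> fin_cases j <;> rfl

lemma exists_abc {M : Matrix (Fin 3) (Fin 3) R} (h : IsHeis M) :
    ∃ a b c, M = !![1, a, c; 0, 1, b; 0, 0, 1] := ⟨_, _, _, h⟩

lemma mul_mk (a b c a' b' c' : R) :
    !![1, a, c; 0, 1, b; 0, 0, 1] * !![1, a', c'; 0, 1, b'; 0, 0, 1]
      = !![1, a + a', c + a * b' + c'; 0, 1, b + b'; 0, 0, 1] := by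
  simp [Matrix.mul_fin_three]; ring_nf <;> simp

lemma inv_mul_mk (a b c : R) :
    !![1, -a, a * b - c; 0, 1, -b; 0, 0, 1] * !![1, a, c; 0, 1, b; 0, 0, 1]
      = !![1, 0, 0; 0, 1, 0; 0, 0, 1] := by
  rw [mul_mk]; norm_num; ring_nf

instance : Group (Heis R) where
  mul x y := ⟨x.1 * y.1, by
    obtain ⟨a, b, c, hx⟩ := exists_abc x.2
    obtain ⟨a', b', c', hy⟩ := exists_abc y.2
    rw [hx, hy, mul_mk]; exact isHeis_mk _ _ _⟩
  one := ⟨!![1, 0, 0; 0, 1, 0; 0, 0, 1], isHeis_mk 0 0 0⟩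
  inv x := ⟨!![1, -(x.1 0 1), x.1 0 1 * x.1 1 2 - x.1 0 2; 0, 1, -(x.1 1 2); 0, 0, 1],
    isHeis_mk _ _ _⟩
  mul_assoc x y z := Subtype.ext (mul_assoc x.1 y.1 z.1)
  one_mul x := Subtype.ext (by
    show !![1, 0, 0; 0, 1, 0; 0, 0, 1] * x.1 = x.1
    obtain ⟨a, b, c, hx⟩ := exists_abc x.2
    rw [hx, mul_mk]; norm_num)
  mul_one x := Subtype.ext (by
    show x.1 * !![1, 0, 0; 0, 1, 0; 0, 0, 1] = x.1
    obtain ⟨a, b, c, hx⟩ := exists_abc x.2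
    rw [hx, mul_mk]; norm_num)
  inv_mul_cancel x := Subtype.ext (by
    show !![1, -(x.1 0 1), x.1 0 1 * x.1 1 2 - x.1 0 2; 0, 1, -(x.1 1 2); 0, 0, 1] * x.1
        = !![1, 0, 0; 0, 1, 0; 0, 0, 1]
    obtain ⟨a, b, c, hx⟩ := exists_abc x.2
    rw [hx]; simpa using inv_mul_mk a b c)

lemma mul_val (x y : Heis R) : (x * y).1 = x.1 * y.1 := rfl
lemma one_val : (1 : Heis R).1 = !![1, 0, 0; 0, 1, 0; 0, 0, 1] := rfl

/-- The generator γ₁ of the discrete Heisenberg group. -/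
def γ₁ : Heis ℤ := ⟨!![1, 1, 0; 0, 1, 0; 0, 0, 1], isHeis_mk 1 0 0⟩

/-- The generator γ₂ of the discrete Heisenberg group. -/
def γ₂ : Heis ℤ := ⟨!![1, 0, 0; 0, 1, 1; 0, 0, 1], isHeis_mk 0 1 0⟩

end Heis


namespace Heis

variable {R : Type*} [CommRing R]

/-- Convenient constructor for Heisenberg elements. -/
def mk (a b c : R) : Heis R := ⟨!![1, a, c; 0, 1, b; 0, 0, 1], isHeis_mk a b c⟩

lemma mk_eq_of {a b c a' b' c' : R} (h1 : a = a') (h2 : b = b') (h3 : c = c') :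
    mk a b c = mk a' b' c' := by subst h1; subst h2; subst h3; rfl

lemma mk_mul' (a b c a' b' c' : R) :
    mk a b c * mk a' b' c' = mk (a + a') (b + b') (c + a * b' + c') :=
  Subtype.ext (by rw [mul_val]; exact mul_mk a b c a' b' c')

lemma one_eq : (1 : Heis R) = mk 0 0 0 := rfl

lemma mk_inv (a b c : R) : (mk a b c)⁻¹ = mk (-a) (-b) (a * b - c) :=
  inv_eq_of_mul_eq_one_right (by rw [mk_mul', one_eq]; apply mk_eq_of <;> ring)

lemma mk_c_inj {a b c a' b' c' : R} (h : mk a b c = mk a' b' c') : c = c' := by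
  have := congrArg (fun g => g.1 0 2) h
  simpa [mk] using this

lemma comm_mk (a b c a' b' c' : R) :
    mk a b c * mk a' b' c' * (mk a b c)⁻¹ * (mk a' b' c')⁻¹
      = mk 0 0 (a * b' - a' * b) := by
  rw [mk_inv, mk_inv, mk_mul', mk_mul', mk_mul']
  apply mk_eq_of <;> ring

lemma zpow_mk (a b c : R) (hab : a * b = 0) (n : ℤ) :
    mk a b c ^ n = mk (n * a) (n * b) (n * c) := by
  induction n using Int.induction_on with
  | zero => rw [_root_.zpow_zero, one_eq]; apply mk_eq_of <;> push_cast <;> ring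
  | succ n ih =>
      rw [_root_.zpow_add_one, ih, mk_mul']
      apply mk_eq_of
      · push_cast; ring
      · push_cast; ring
      · push_cast; linear_combination (n : R) * hab
  | pred n ih =>
      rw [_root_.zpow_sub_one, ih, mk_inv, mk_mul']
      apply mk_eq_of
      · push_cast; ring
      · push_cast; ring
      · push_cast; linear_combination ((n : R) + 1) * hab

lemma gamma_one_eq : γ₁ = mk 1 0 0 := rfl
lemma gamma_two_eq : γ₂ = mk 0 1 0 := rfl

lemma decomp (x y z : ℤ) :
    (mk x y z : Heis ℤ) = γ₁ ^ x * γ₂ ^ y * (mk 0 0 1) ^ (z - x * y) := by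
  rw [gamma_one_eq, gamma_two_eq, zpow_mk _ _ _ (by ring), zpow_mk _ _ _ (by ring),
    zpow_mk _ _ _ (by ring), mk_mul', mk_mul']
  apply mk_eq_of <;> push_cast <;> ring

end Heis

/-- A homomorphism ρ : Γ → G from the discrete to the real Heisenberg group is
injective iff its image is non-abelian. -/
theorem injective_iff_image_nonabelian (ρ : Heis ℤ →* Heis ℝ) :
    Function.Injective ρ ↔ ¬ ∀ x ∈ ρ.range, ∀ y ∈ ρ.range, x * y = y * x := by
  have hZ1 : (Heis.mk 0 0 (1 : ℤ)) = Heis.γ₁ * Heis.γ₂ * Heis.γ₁⁻¹ * Heis.γ₂⁻¹ := by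
    rw [Heis.gamma_one_eq, Heis.gamma_two_eq, Heis.comm_mk]
    norm_num
  constructor
  · intro hinj habs
    have h := habs (ρ Heis.γ₁) ⟨Heis.γ₁, rfl⟩ (ρ Heis.γ₂) ⟨Heis.γ₂, rfl⟩
    rw [← _root_.map_mul, ← _root_.map_mul] at h
    have h2 := hinj h
    rw [Heis.gamma_one_eq, Heis.gamma_two_eq, Heis.mk_mul', Heis.mk_mul'] at h2
    have h3 := Heis.mk_c_inj h2
    norm_num at h3
  · intro h
    push_neg at h
    obtain ⟨x, hx, y, hy, hxy⟩ := h
    obtain ⟨a, b, c, hA⟩ := Heis.exists_abc (ρ Heis.γ₁).2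
    obtain ⟨a', b', c', hB⟩ := Heis.exists_abc (ρ Heis.γ₂).2
    have hA' : ρ Heis.γ₁ = Heis.mk a b c := Subtype.ext hA
    have hB' : ρ Heis.γ₂ = Heis.mk a' b' c' := Subtype.ext hB
    have hgen : ∀ g : Heis ℤ, ∃ u v w : ℤ,
        g = Heis.γ₁ ^ u * Heis.γ₂ ^ v * (Heis.mk 0 0 1) ^ w := by
      intro g
      obtain ⟨u, v, w, hg⟩ := Heis.exists_abc g.2
      have hgm : g = Heis.mk u v w := Subtype.ext hg
      exact ⟨u, v, w - u * v, by rw [hgm]; exact Heis.decomp u v w⟩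
    have hd : a * b' - a' * b ≠ 0 := by
      intro hd0
      have hAB : ρ Heis.γ₁ * ρ Heis.γ₂ = ρ Heis.γ₂ * ρ Heis.γ₁ := by
        rw [hA', hB', Heis.mk_mul', Heis.mk_mul']
        apply Heis.mk_eq_of
        · ring
        · ring
        · linear_combination hd0
      have hc : Commute (ρ Heis.γ₁) (ρ Heis.γ₂) := hAB
      have hZ : ρ (Heis.mk 0 0 1) = 1 := by
        rw [hZ1, _root_.map_mul, _root_.map_mul, _root_.map_mul, _root_.map_inv, _root_.map_inv, hAB]
        group
      obtain ⟨g, hg⟩ := hx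
      obtain ⟨g', hg'⟩ := hy
      obtain ⟨u, v, w, hgd⟩ := hgen g
      obtain ⟨u', v', w', hgd'⟩ := hgen g'
      apply hxy
      rw [← hg, ← hg', hgd, hgd', _root_.map_mul, _root_.map_mul, _root_.map_mul, _root_.map_mul,
        _root_.map_zpow, _root_.map_zpow, _root_.map_zpow, _root_.map_zpow, _root_.map_zpow, _root_.map_zpow]
      simp only [hZ, _root_.one_zpow, mul_one]
      have c1 : Commute (ρ Heis.γ₁ ^ u) (ρ Heis.γ₁ ^ u' * ρ Heis.γ₂ ^ v') :=
        Commute.mul_right ((Commute.refl _).zpow_zpow u u') (hc.zpow_zpow u v')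
      have c2 : Commute (ρ Heis.γ₂ ^ v) (ρ Heis.γ₁ ^ u' * ρ Heis.γ₂ ^ v') :=
        Commute.mul_right (hc.symm.zpow_zpow v u') ((Commute.refl _).zpow_zpow v v')
      exact (c1.mul_left c2).eq
    have key : ∀ n : ℤ, ρ (Heis.mk 0 0 n) = Heis.mk 0 0 ((n : ℝ) * (a * b' - a' * b)) := by
      intro n
      have h1 : (Heis.mk 0 0 n : Heis ℤ) = (Heis.mk 0 0 1) ^ n := by
        rw [Heis.zpow_mk 0 0 1 (by ring) n]; apply Heis.mk_eq_of <;> push_cast <;> ring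
      have h2 : ρ (Heis.mk 0 0 1) = Heis.mk 0 0 (a * b' - a' * b) := by
        rw [hZ1, _root_.map_mul, _root_.map_mul, _root_.map_mul, _root_.map_inv, _root_.map_inv, hA', hB', Heis.comm_mk]
      rw [h1, _root_.map_zpow, h2, Heis.zpow_mk _ _ _ (by ring)]
      apply Heis.mk_eq_of <;> push_cast <;> ring
    have hzero : ∀ n : ℤ, ρ (Heis.mk 0 0 n) = 1 → n = 0 := by
      intro n hn
      have h5 := (key n).symm.trans hn
      rw [Heis.one_eq] at h5
      have h0 := Heis.mk_c_inj h5
      have h6 : (n : ℝ) = 0 := by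
        rcases mul_eq_zero.1 h0 with h | h
        · exact h
        · exact absurd h hd
      exact_mod_cast h6
    rw [injective_iff_map_eq_one]
    intro g hg1
    obtain ⟨u, v, w, hg⟩ := Heis.exists_abc g.2
    have hgm : g = Heis.mk u v w := Subtype.ext hg
    have hu : ρ (Heis.mk 0 0 u) = 1 := by
      have hcu : Heis.mk 0 0 u = g * Heis.γ₂ * g⁻¹ * Heis.γ₂⁻¹ := by
        rw [hgm, Heis.gamma_two_eq, Heis.comm_mk]
        apply Heis.mk_eq_of <;> ring
      rw [hcu, _root_.map_mul, _root_.map_mul, _root_.map_mul, _root_.map_inv, _root_.map_inv, hg1]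
      group
    have hv : ρ (Heis.mk 0 0 v) = 1 := by
      have hcv : Heis.mk 0 0 v = Heis.γ₁ * g * Heis.γ₁⁻¹ * g⁻¹ := by
        rw [hgm, Heis.gamma_one_eq, Heis.comm_mk]
        apply Heis.mk_eq_of <;> ring
      rw [hcv, _root_.map_mul, _root_.map_mul, _root_.map_mul, _root_.map_inv, _root_.map_inv, hg1]
      group
    have hu0 : u = 0 := hzero u hu
    have hv0 : v = 0 := hzero v hv
    subst hu0; subst hv0
    rw [hgm] at hg1
    have hw0 : w = 0 := hzero w hg1
    subst hw0
    rw [hgm]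
    exact Heis.one_eq.symm
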